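/- For a = 1, 2, let (H_a, {J_{a,k}}_{k∈K_a}) specify Lindblad generators L_a on n_a×n_a complex matrices with real weights {w^{(a)}_k}_{k∈K_a}. Consider the joint Lindblad generator L on (n_1·n_2)×(n_1·n_2) matrices with Hamiltonian H = H_1⊗1 + 1⊗H_2 and jump operators {J_{1,k}⊗1 : k ∈ K_1} ∪ {1⊗J_{2,k} : k ∈ K_2}, where the jump operator coming from subsystem a of type k carries weight w^{(a)}_k. Suppose the joint system has a product steady state ρˢˢ = ρ_1 ⊗ ρ_2 with ρ_1, ρ_2 density matrices, and suppose the improper integrals defining the noises of the joint system and of both subsystems converge entrywise. Then ρ_a is a steady state of L_a for a = 1, 2, and the joint asymptotic average current and noise satisfy F = F^{(1)} + F^{(2)} and D = D^{(1)} + D^{(2)}, where F^{(a)} and D^{(a)} denote the asymptotic average current and noise of subsystem a computed with generator L_a, steady state ρ_a and weights {w^{(a)}_k}. -/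

import Mathlib

open Matrix Kronecker MeasureTheory
open scoped ComplexOrder

/-- The Lindblad generator with Hamiltonian `H` and jump operators `J k`:
`L[ρ] = −i(Hρ − ρH) + Σ_k (J_k ρ J_k† − ½(J_k†J_k ρ + ρ J_k†J_k))`. -/
noncomputable def lindblad {n K : Type} [Fintype n] [Fintype K]
    (H : Matrix n n ℂ) (J : K → Matrix n n ℂ) (ρ : Matrix n n ℂ) : Matrix n n ℂ :=
  (-Complex.I) • (H * ρ - ρ * H) +
    ∑ k, (J k * ρ * (J k)ᴴ - (1 / 2 : ℂ) • ((J k)ᴴ * J k * ρ + ρ * ((J k)ᴴ * J k)))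

/-- `ρ` is a density matrix: positive semidefinite with trace one. -/
def IsDensityMatrix {n : Type} [Fintype n] (ρ : Matrix n n ℂ) : Prop :=
  ρ.PosSemidef ∧ ρ.trace = 1

/-- The vectorization `vec(A)` of a matrix (columns stacked on top of each other):
`vec(A)_{(i,j)} = A_{j,i}` (entry in column `i`, row `j`). -/
def vecM {n : Type} (A : Matrix n n ℂ) : n × n → ℂ := fun p => A p.2 p.1

/-- The vectorized Lindblad generator
`L̂ = −i(1⊗H − Hᵀ⊗1) + Σ_k (J̄_k⊗J_k − ½·1⊗(J_k†J_k) − ½·(J_kᵀJ̄_k)⊗1)`. -/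
noncomputable def lindbladHat {n K : Type} [Fintype n] [DecidableEq n] [Fintype K]
    (H : Matrix n n ℂ) (J : K → Matrix n n ℂ) : Matrix (n × n) (n × n) ℂ :=
  (-Complex.I) • ((1 : Matrix n n ℂ) ⊗ₖ H - Hᵀ ⊗ₖ (1 : Matrix n n ℂ)) +
    ∑ k, ((J k).map (starRingEnd ℂ) ⊗ₖ J k
      - (1 / 2 : ℂ) • ((1 : Matrix n n ℂ) ⊗ₖ ((J k)ᴴ * J k))
      - (1 / 2 : ℂ) • (((J k)ᵀ * (J k).map (starRingEnd ℂ)) ⊗ₖ (1 : Matrix n n ℂ)))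

/-- The current matrix `C = Σ_k w_k (J̄_k ⊗ J_k)`. -/
noncomputable def currentMat {n K : Type} [Fintype n] [Fintype K]
    (J : K → Matrix n n ℂ) (w : K → ℝ) : Matrix (n × n) (n × n) ℂ :=
  ∑ k, (w k : ℂ) • ((J k).map (starRingEnd ℂ) ⊗ₖ J k)

/-- The asymptotic average current `F = vec(1)ᴴ C vec(ρˢˢ)`. -/
noncomputable def avgCurrent {n K : Type} [Fintype n] [DecidableEq n] [Fintype K]
    (J : K → Matrix n n ℂ) (w : K → ℝ) (ρ : Matrix n n ℂ) : ℂ :=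
  star (vecM (1 : Matrix n n ℂ)) ⬝ᵥ (currentMat J w *ᵥ vecM ρ)

/-- The integrand `e^{L̂τ} − vec(ρˢˢ)·vec(1)ᴴ` of the improper integral in the noise. -/
noncomputable def noiseIntegrand {n K : Type} [Fintype n] [DecidableEq n] [Fintype K]
    (H : Matrix n n ℂ) (J : K → Matrix n n ℂ) (ρ : Matrix n n ℂ) (τ : ℝ) :
    Matrix (n × n) (n × n) ℂ :=
  NormedSpace.exp ((τ : ℂ) • lindbladHat H J)
    - Matrix.vecMulVec (vecM ρ) (star (vecM (1 : Matrix n n ℂ)))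

/-- Entrywise convergence of the improper integral `∫₀^∞ (e^{L̂τ} − vec(ρˢˢ)vec(1)ᴴ) dτ`. -/
def noiseConv {n K : Type} [Fintype n] [DecidableEq n] [Fintype K]
    (H : Matrix n n ℂ) (J : K → Matrix n n ℂ) (ρ : Matrix n n ℂ) : Prop :=
  ∀ a b, IntegrableOn (fun τ : ℝ => noiseIntegrand H J ρ τ a b) (Set.Ioi 0)

/-- The matrix `∫₀^∞ (e^{L̂τ} − vec(ρˢˢ)vec(1)ᴴ) dτ`, computed entrywise. -/
noncomputable def noiseQ {n K : Type} [Fintype n] [DecidableEq n] [Fintype K]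
    (H : Matrix n n ℂ) (J : K → Matrix n n ℂ) (ρ : Matrix n n ℂ) :
    Matrix (n × n) (n × n) ℂ :=
  Matrix.of fun a b => ∫ τ in Set.Ioi (0 : ℝ), noiseIntegrand H J ρ τ a b

/-- The asymptotic noise
`D = vec(1)ᴴ C₂ vec(ρˢˢ) + 2 vec(1)ᴴ C (∫₀^∞ (e^{L̂τ} − vec(ρˢˢ)vec(1)ᴴ) dτ) C vec(ρˢˢ)`. -/
noncomputable def noise {n K : Type} [Fintype n] [DecidableEq n] [Fintype K]
    (H : Matrix n n ℂ) (J : K → Matrix n n ℂ) (w : K → ℝ) (ρ : Matrix n n ℂ) : ℂ :=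
  star (vecM (1 : Matrix n n ℂ)) ⬝ᵥ (currentMat J (fun k => w k ^ 2) *ᵥ vecM ρ)
    + 2 * (star (vecM (1 : Matrix n n ℂ)) ⬝ᵥ (currentMat J w *ᵥ
        (noiseQ H J ρ *ᵥ (currentMat J w *ᵥ vecM ρ))))


set_option linter.unusedSectionVars false
set_option linter.unusedVariables false
set_option maxHeartbeats 1000000

open NormedSpace

section Helpers

variable {n m p K : Type} [Fintype n] [Fintype m] [Fintype p] [Fintype K]

lemma vecM_add (A B : Matrix n n ℂ) : vecM (A + B) = vecM A + vecM B := rfl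
lemma vecM_sub (A B : Matrix n n ℂ) : vecM (A - B) = vecM A - vecM B := rfl
lemma vecM_smul (c : ℂ) (A : Matrix n n ℂ) : vecM (c • A) = c • vecM A := rfl
lemma vecM_zero : vecM (0 : Matrix n n ℂ) = 0 := rfl
lemma vecM_sum (f : K → Matrix n n ℂ) : vecM (∑ k, f k) = ∑ k, vecM (f k) := by
  funext q; simp [vecM, Matrix.sum_apply]

lemma sum_mulVec' (f : K → Matrix n n ℂ) (v : n → ℂ) :
    (∑ k, f k) *ᵥ v = ∑ k, (f k *ᵥ v) := by
  funext i
  simp [Matrix.mulVec, dotProduct, Matrix.sum_apply, Finset.sum_mul, Finset.sum_apply]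
  rw [Finset.sum_comm]

lemma kron_mulVec_vecM (A B M : Matrix n n ℂ) :
    (Bᵀ ⊗ₖ A) *ᵥ vecM M = vecM (A * M * B) := by
  funext q
  simp only [Matrix.mulVec, dotProduct, vecM, Fintype.sum_prod_type,
    Matrix.kroneckerMap_apply, Matrix.mul_apply, transpose_apply, Finset.sum_mul]
  refine Finset.sum_congr rfl fun i _ => Finset.sum_congr rfl fun j _ => by ring

lemma conj_eq_transpose_conjT (A : Matrix n n ℂ) :
    A.map (starRingEnd ℂ) = (Aᴴ)ᵀ := by
  ext i j; simp

lemma dot_vecM_one [DecidableEq n] (A : Matrix n n ℂ) :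
    star (vecM (1 : Matrix n n ℂ)) ⬝ᵥ vecM A = A.trace := by
  simp only [dotProduct, Pi.star_apply, vecM, Fintype.sum_prod_type, Matrix.one_apply,
    Matrix.trace, Matrix.diag]
  rw [Finset.sum_comm]
  refine Finset.sum_congr rfl fun i _ => ?_
  simp [apply_ite, Finset.sum_ite_eq]

lemma lindbladHat_mulVec [DecidableEq n] (H : Matrix n n ℂ) (J : K → Matrix n n ℂ)
    (ρ : Matrix n n ℂ) :
    lindbladHat H J *ᵥ vecM ρ = vecM (lindblad H J ρ) := by
  have e1 : (((1 : Matrix n n ℂ)) ⊗ₖ H) *ᵥ vecM ρ = vecM (H * ρ) := by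
    conv_lhs => rw [← Matrix.transpose_one (n := n) (α := ℂ)]
    rw [kron_mulVec_vecM, mul_one]
  have e2 : (Hᵀ ⊗ₖ (1 : Matrix n n ℂ)) *ᵥ vecM ρ = vecM (ρ * H) := by
    rw [kron_mulVec_vecM, one_mul]
  have e3 : ∀ k, (((J k).map (starRingEnd ℂ)) ⊗ₖ J k) *ᵥ vecM ρ
      = vecM (J k * ρ * (J k)ᴴ) := by
    intro k
    rw [conj_eq_transpose_conjT, kron_mulVec_vecM]
  have e4 : ∀ k, (((1 : Matrix n n ℂ)) ⊗ₖ ((J k)ᴴ * J k)) *ᵥ vecM ρ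
      = vecM ((J k)ᴴ * J k * ρ) := by
    intro k
    conv_lhs => rw [← Matrix.transpose_one (n := n) (α := ℂ)]
    rw [kron_mulVec_vecM, mul_one]
  have e5 : ∀ k, ((((J k)ᵀ * (J k).map (starRingEnd ℂ))) ⊗ₖ (1 : Matrix n n ℂ)) *ᵥ vecM ρ
      = vecM (ρ * ((J k)ᴴ * J k)) := by
    intro k
    have : (J k)ᵀ * (J k).map (starRingEnd ℂ) = ((J k)ᴴ * J k)ᵀ := by
      rw [Matrix.transpose_mul, conj_eq_transpose_conjT]
    rw [this, kron_mulVec_vecM, one_mul]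
  rw [lindbladHat, lindblad]
  rw [Matrix.add_mulVec, Matrix.smul_mulVec, Matrix.sub_mulVec, sum_mulVec']
  rw [e1, e2]
  have : ∀ k, ((J k).map (starRingEnd ℂ) ⊗ₖ J k
      - (1 / 2 : ℂ) • ((1 : Matrix n n ℂ) ⊗ₖ ((J k)ᴴ * J k))
      - (1 / 2 : ℂ) • (((J k)ᵀ * (J k).map (starRingEnd ℂ)) ⊗ₖ (1 : Matrix n n ℂ))) *ᵥ vecM ρ
      = vecM (J k * ρ * (J k)ᴴ
        - (1 / 2 : ℂ) • ((J k)ᴴ * J k * ρ + ρ * ((J k)ᴴ * J k))) := by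
    intro k
    rw [Matrix.sub_mulVec, Matrix.sub_mulVec, Matrix.smul_mulVec,
      Matrix.smul_mulVec, e3, e4, e5]
    funext q
    simp [vecM, Matrix.sub_apply, Matrix.smul_apply, Matrix.add_apply]
    ring
  simp_rw [this]
  rw [vecM_add, vecM_smul, vecM_sub, vecM_sum]

lemma trace_lindblad (H : Matrix n n ℂ) (J : K → Matrix n n ℂ) (ρ : Matrix n n ℂ) :
    (lindblad H J ρ).trace = 0 := by
  have h1 : ∀ k : K, (J k * ρ * (J k)ᴴ).trace = ((J k)ᴴ * J k * ρ).trace := fun k =>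
    Matrix.trace_mul_cycle (J k) ρ (J k)ᴴ
  have h2 : ∀ k : K, (ρ * ((J k)ᴴ * J k)).trace = ((J k)ᴴ * J k * ρ).trace := fun k =>
    Matrix.trace_mul_comm ρ ((J k)ᴴ * J k)
  simp only [lindblad, Matrix.trace_add, Matrix.trace_smul, Matrix.trace_sub,
    Matrix.trace_sum, Matrix.trace_mul_comm H ρ, h1, h2]
  simp
  ring_nf

lemma vecM_std [DecidableEq n] (b : n × n) :
    vecM (Matrix.single b.2 b.1 (1 : ℂ)) = Pi.single b 1 := by
  funext q
  simp only [vecM, Matrix.single, Matrix.of_apply, Pi.single_apply]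
  by_cases h : q = b
  · subst h; simp
  · rw [if_neg h, if_neg]
    rintro ⟨h1, h2⟩
    exact h (Prod.ext h2.symm h1.symm)

lemma vecMul_entry (v : n → ℂ) (M : Matrix n n ℂ) [DecidableEq n] (b : n) :
    (v ᵥ* M) b = v ⬝ᵥ (M *ᵥ Pi.single b 1) := by
  simp [Matrix.vecMul, Matrix.mulVec_single, dotProduct, Matrix.mulVec, Pi.single_apply]

lemma vecMul_lindbladHat [DecidableEq n] (H : Matrix n n ℂ) (J : K → Matrix n n ℂ) :
    star (vecM (1 : Matrix n n ℂ)) ᵥ* lindbladHat H J = 0 := by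
  funext b
  rw [vecMul_entry, ← vecM_std b, lindbladHat_mulVec, dot_vecM_one, trace_lindblad]
  rfl

end Helpers

section ExpHelpers

variable {n p : Type} [Fintype n] [DecidableEq n] [Fintype p] [DecidableEq p]

/-- vecMul as a linear map in the matrix argument. -/
noncomputable def vecMulLM (v : n → ℂ) : Matrix n n ℂ →ₗ[ℂ] (n → ℂ) where
  toFun M := v ᵥ* M
  map_add' A B := by
    funext j; simp [Matrix.vecMul, dotProduct, mul_add, Finset.sum_add_distrib]
  map_smul' c A := by
    funext j; simp [Matrix.vecMul, dotProduct, Finset.mul_sum]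
    refine Finset.sum_congr rfl fun i _ => by ring

noncomputable def mulVecLM (v : n → ℂ) : Matrix n n ℂ →ₗ[ℂ] (n → ℂ) where
  toFun M := M *ᵥ v
  map_add' A B := by
    funext j; simp [Matrix.mulVec, dotProduct, add_mul, Finset.sum_add_distrib]
  map_smul' c A := by
    funext j; simp [Matrix.mulVec, dotProduct, Finset.mul_sum]
    refine Finset.sum_congr rfl fun i _ => by ring

lemma map_exp_matrix (f : Matrix n n ℂ →ₐ[ℂ] Matrix p p ℂ) (A : Matrix n n ℂ) :
    f (exp A) = exp (f A) := by
  letI : NormedRing (Matrix n n ℂ) := Matrix.linftyOpNormedRing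
  letI : NormedAlgebra ℂ (Matrix n n ℂ) := Matrix.linftyOpNormedAlgebra
  letI : NormedRing (Matrix p p ℂ) := Matrix.linftyOpNormedRing
  letI : NormedAlgebra ℂ (Matrix p p ℂ) := Matrix.linftyOpNormedAlgebra
  letI : NormedAlgebra ℚ (Matrix n n ℂ) := Matrix.linftyOpNormedAlgebra
  letI : NormedAlgebra ℚ (Matrix p p ℂ) := Matrix.linftyOpNormedAlgebra
  exact NormedSpace.map_exp f (f.toLinearMap.continuous_of_finiteDimensional) A

lemma vecMul_exp (v : n → ℂ) (M : Matrix n n ℂ) (h : v ᵥ* M = 0) :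
    v ᵥ* exp M = v := by
  letI : NormedRing (Matrix n n ℂ) := Matrix.linftyOpNormedRing
  letI : NormedAlgebra ℂ (Matrix n n ℂ) := Matrix.linftyOpNormedAlgebra
  have hpow : ∀ k : ℕ, k ≠ 0 → v ᵥ* (M ^ k) = 0 := by
    intro k hk
    obtain ⟨m, rfl⟩ := Nat.exists_eq_succ_of_ne_zero hk
    rw [pow_succ']
    rw [← Matrix.vecMul_vecMul, h, Matrix.zero_vecMul]
  have hf : v ᵥ* exp M = (vecMulLM v).toContinuousLinearMap (exp M) := rfl
  rw [hf, exp_eq_tsum ℂ]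
  beta_reduce
  have h2 := ContinuousLinearMap.map_tsum (f := fun k : ℕ => ((k.factorial : ℂ))⁻¹ • M ^ k)
    (LinearMap.toContinuousLinearMap (vecMulLM v))
    (NormedSpace.expSeries_summable' (𝕂 := ℂ) M)
  rw [h2]
  have : ∀ k : ℕ, (vecMulLM v).toContinuousLinearMap ((k.factorial : ℂ)⁻¹ • M ^ k)
      = (k.factorial : ℂ)⁻¹ • (v ᵥ* (M ^ k)) := by
    intro k; simp [vecMulLM]
  simp_rw [this]
  rw [tsum_eq_single 0]
  · simp [Matrix.vecMul_one]
  · intro k hk; simp [hpow k hk]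

lemma exp_mulVec (v : n → ℂ) (M : Matrix n n ℂ) (h : M *ᵥ v = 0) :
    exp M *ᵥ v = v := by
  letI : NormedRing (Matrix n n ℂ) := Matrix.linftyOpNormedRing
  letI : NormedAlgebra ℂ (Matrix n n ℂ) := Matrix.linftyOpNormedAlgebra
  have hpow : ∀ k : ℕ, k ≠ 0 → (M ^ k) *ᵥ v = 0 := by
    intro k hk
    obtain ⟨m, rfl⟩ := Nat.exists_eq_succ_of_ne_zero hk
    rw [pow_succ, ← Matrix.mulVec_mulVec, h, Matrix.mulVec_zero]
  have hf : exp M *ᵥ v = (mulVecLM v).toContinuousLinearMap (exp M) := rfl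
  rw [hf, exp_eq_tsum ℂ]
  beta_reduce
  have h2 := ContinuousLinearMap.map_tsum (f := fun k : ℕ => ((k.factorial : ℂ))⁻¹ • M ^ k)
    (LinearMap.toContinuousLinearMap (mulVecLM v))
    (NormedSpace.expSeries_summable' (𝕂 := ℂ) M)
  rw [h2]
  have : ∀ k : ℕ, (mulVecLM v).toContinuousLinearMap ((k.factorial : ℂ)⁻¹ • M ^ k)
      = (k.factorial : ℂ)⁻¹ • ((M ^ k) *ᵥ v) := by
    intro k; simp [mulVecLM]
  simp_rw [this]
  rw [tsum_eq_single 0]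
  · simp [Matrix.one_mulVec]
  · intro k hk; simp [hpow k hk]

end ExpHelpers

section Kron

variable {a b : Type} [Fintype a] [DecidableEq a] [Fintype b] [DecidableEq b]

def tens {α β : Type} (u : α → ℂ) (v : β → ℂ) : α × β → ℂ := fun p => u p.1 * v p.2

lemma tens_dot (u₁ v₁ : a → ℂ) (u₂ v₂ : b → ℂ) :
    tens u₁ u₂ ⬝ᵥ tens v₁ v₂ = (u₁ ⬝ᵥ v₁) * (u₂ ⬝ᵥ v₂) := by
  simp only [dotProduct, tens, Fintype.sum_prod_type]
  rw [Finset.sum_mul_sum]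
  refine Finset.sum_congr rfl fun i _ => Finset.sum_congr rfl fun j _ => by ring

lemma kron_mulVec_tens (M₁ : Matrix a a ℂ) (M₂ : Matrix b b ℂ) (v₁ : a → ℂ) (v₂ : b → ℂ) :
    (M₁ ⊗ₖ M₂) *ᵥ tens v₁ v₂ = tens (M₁ *ᵥ v₁) (M₂ *ᵥ v₂) := by
  funext p
  simp only [Matrix.mulVec, dotProduct, tens, Fintype.sum_prod_type,
    Matrix.kroneckerMap_apply]
  rw [Finset.sum_mul_sum]
  refine Finset.sum_congr rfl fun i _ => Finset.sum_congr rfl fun j _ => by ring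

lemma star_tens (u : a → ℂ) (v : b → ℂ) : star (tens u v) = tens (star u) (star v) := by
  funext p; simp [tens]

lemma tens_add_left (u u' : a → ℂ) (v : b → ℂ) :
    tens (u + u') v = tens u v + tens u' v := by
  funext p; simp [tens]; ring
lemma tens_add_right (u : a → ℂ) (v v' : b → ℂ) :
    tens u (v + v') = tens u v + tens u v' := by
  funext p; simp [tens]; ring
lemma tens_sub_left (u u' : a → ℂ) (v : b → ℂ) :
    tens (u - u') v = tens u v - tens u' v := by
  funext p; simp [tens]; ring
lemma tens_sub_right (u : a → ℂ) (v v' : b → ℂ) :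
    tens u (v - v') = tens u v - tens u v' := by
  funext p; simp [tens]; ring

lemma reindex_dot {α β : Type} [Fintype α] [Fintype β] [DecidableEq α] [DecidableEq β]
    (e : α ≃ β) (x y : β → ℂ) (N : Matrix β β ℂ) :
    (x ∘ ⇑e) ⬝ᵥ ((Matrix.reindex e.symm e.symm N) *ᵥ (y ∘ ⇑e)) = x ⬝ᵥ (N *ᵥ y) := by
  simp only [dotProduct, Matrix.mulVec, Matrix.reindex_apply, Matrix.submatrix_apply,
    Function.comp_apply, Equiv.symm_symm]
  rw [← Equiv.sum_comp e (fun i => x i * ∑ j, N i j * y j)]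
  refine Finset.sum_congr rfl fun i _ => ?_
  congr 1
  rw [← Equiv.sum_comp e (fun j => N (e i) j * y j)]

lemma map_kron (A : Matrix a a ℂ) (B : Matrix b b ℂ) :
    (A ⊗ₖ B).map (starRingEnd ℂ) = A.map (starRingEnd ℂ) ⊗ₖ B.map (starRingEnd ℂ) := by
  ext ⟨i,j⟩ ⟨k,l⟩; simp

lemma conjT_kron (A : Matrix a a ℂ) (B : Matrix b b ℂ) :
    (A ⊗ₖ B)ᴴ = Aᴴ ⊗ₖ Bᴴ := by
  ext ⟨i,j⟩ ⟨k,l⟩; simp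

def σe (n₁ n₂ : Type) : (n₁ × n₂) × (n₁ × n₂) ≃ (n₁ × n₁) × (n₂ × n₂) :=
  Equiv.prodProdProdComm n₁ n₂ n₁ n₂

lemma kron4 (A : Matrix a a ℂ) (B : Matrix b b ℂ)
    (C : Matrix a a ℂ) (D : Matrix b b ℂ) :
    (A ⊗ₖ B) ⊗ₖ (C ⊗ₖ D)
      = Matrix.reindex (σe a b).symm (σe a b).symm ((A ⊗ₖ C) ⊗ₖ (B ⊗ₖ D)) := by
  ext ⟨⟨i₁,i₂⟩,⟨i₃,i₄⟩⟩ ⟨⟨j₁,j₂⟩,⟨j₃,j₄⟩⟩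
  simp [σe, Equiv.prodProdProdComm]
  ring

lemma vecM_kron' {n₁ n₂ : Type} (A : Matrix n₁ n₁ ℂ) (B : Matrix n₂ n₂ ℂ) :
    vecM (A ⊗ₖ B) = (tens (vecM A) (vecM B)) ∘ ⇑(σe n₁ n₂) := by
  funext q
  obtain ⟨⟨i₁,i₂⟩,⟨j₁,j₂⟩⟩ := q
  simp [vecM, tens, σe, Equiv.prodProdProdComm]

/-- `A ↦ A ⊗ₖ 1` as an algebra hom. -/
noncomputable def kronLAlg (a b : Type) [Fintype a] [DecidableEq a] [Fintype b] [DecidableEq b] :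
    Matrix a a ℂ →ₐ[ℂ] Matrix (a × b) (a × b) ℂ :=
  AlgHom.ofLinearMap
    { toFun := fun A => A ⊗ₖ (1 : Matrix b b ℂ)
      map_add' := fun A B => Matrix.add_kronecker A B 1
      map_smul' := fun c A => by simpa using Matrix.smul_kronecker c A (1 : Matrix b b ℂ) }
    Matrix.one_kronecker_one
    (fun A B => by
      have h := Matrix.mul_kronecker_mul A B (1 : Matrix b b ℂ) (1 : Matrix b b ℂ)
      rw [one_mul] at h
      exact h)

noncomputable def kronRAlg (a b : Type) [Fintype a] [DecidableEq a] [Fintype b] [DecidableEq b] :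
    Matrix b b ℂ →ₐ[ℂ] Matrix (a × b) (a × b) ℂ :=
  AlgHom.ofLinearMap
    { toFun := fun B => (1 : Matrix a a ℂ) ⊗ₖ B
      map_add' := fun A B => Matrix.kronecker_add 1 A B
      map_smul' := fun c B => by simpa using Matrix.kronecker_smul c (1 : Matrix a a ℂ) B }
    Matrix.one_kronecker_one
    (fun A B => by
      have h := Matrix.mul_kronecker_mul (1 : Matrix a a ℂ) (1 : Matrix a a ℂ) A B
      rw [one_mul] at h
      exact h)

lemma exp_kron_sum (X : Matrix a a ℂ) (Y : Matrix b b ℂ) :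
    exp (X ⊗ₖ (1 : Matrix b b ℂ) + (1 : Matrix a a ℂ) ⊗ₖ Y)
      = exp X ⊗ₖ exp Y := by
  have hc : Commute (X ⊗ₖ (1 : Matrix b b ℂ)) ((1 : Matrix a a ℂ) ⊗ₖ Y) := by
    unfold Commute SemiconjBy
    rw [← Matrix.mul_kronecker_mul, ← Matrix.mul_kronecker_mul, one_mul, mul_one, one_mul, mul_one]
  rw [Matrix.exp_add_of_commute _ _ hc]
  have h1 : exp (X ⊗ₖ (1 : Matrix b b ℂ)) = exp X ⊗ₖ (1 : Matrix b b ℂ) := by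
    have h := map_exp_matrix (kronLAlg a b) X
    have e : ∀ M : Matrix a a ℂ, (kronLAlg a b) M = M ⊗ₖ (1 : Matrix b b ℂ) := fun _ => rfl
    rw [e, e] at h
    exact h.symm
  have h2 : exp ((1 : Matrix a a ℂ) ⊗ₖ Y) = (1 : Matrix a a ℂ) ⊗ₖ exp Y := by
    have h := map_exp_matrix (kronRAlg a b) Y
    have e : ∀ M : Matrix b b ℂ, (kronRAlg a b) M = (1 : Matrix a a ℂ) ⊗ₖ M := fun _ => rfl
    rw [e, e] at h
    exact h.symm
  rw [h1, h2, ← Matrix.mul_kronecker_mul, mul_one, one_mul]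

lemma exp_reindex {α β : Type} [Fintype α] [Fintype β] [DecidableEq α] [DecidableEq β]
    (e : α ≃ β) (M : Matrix α α ℂ) :
    exp (Matrix.reindex e e M) = Matrix.reindex e e (exp M) := by
  have h := map_exp_matrix (Matrix.reindexAlgEquiv ℂ ℂ e).toAlgHom M
  have e' : ∀ N : Matrix α α ℂ, (Matrix.reindexAlgEquiv ℂ ℂ e).toAlgHom N
      = Matrix.reindex e e N := fun _ => rfl
  rw [e', e'] at h
  exact h.symm

end Kron

section KronSum

variable {a b K : Type} [Fintype a] [DecidableEq a] [Fintype b] [DecidableEq b] [Fintype K]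

lemma sum_kron (f : K → Matrix a a ℂ) (B : Matrix b b ℂ) :
    (∑ k, f k) ⊗ₖ B = ∑ k, (f k ⊗ₖ B) := by
  ext ⟨i,j⟩ ⟨k,l⟩
  simp [Matrix.sum_apply, Finset.sum_mul]

lemma kron_sum (A : Matrix a a ℂ) (f : K → Matrix b b ℂ) :
    A ⊗ₖ (∑ k, f k) = ∑ k, (A ⊗ₖ f k) := by
  ext ⟨i,j⟩ ⟨k,l⟩
  simp [Matrix.sum_apply, Finset.mul_sum]

lemma sub_kron' (A B : Matrix a a ℂ) (C : Matrix b b ℂ) :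
    (A - B) ⊗ₖ C = A ⊗ₖ C - B ⊗ₖ C := by
  ext ⟨i,j⟩ ⟨k,l⟩; simp [Matrix.sub_apply]; ring

lemma kron_sub' (A : Matrix a a ℂ) (B C : Matrix b b ℂ) :
    A ⊗ₖ (B - C) = A ⊗ₖ B - A ⊗ₖ C := by
  ext ⟨i,j⟩ ⟨k,l⟩; simp [Matrix.sub_apply]; ring

lemma kron_cancel_left {A ρ₁ : Matrix a a ℂ} {B ρ₂ : Matrix b b ℂ}
    (h : A ⊗ₖ ρ₂ + ρ₁ ⊗ₖ B = 0) (h₂ : ρ₂.trace = 1) (hB : B.trace = 0) : A = 0 := by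
  ext i j
  have key : ∀ s : b, A i j * ρ₂ s s + ρ₁ i j * B s s = 0 := by
    intro s
    have := congrFun (congrFun h (i, s)) (j, s)
    simpa using this
  have hsum : ∑ s : b, (A i j * ρ₂ s s + ρ₁ i j * B s s) = 0 := by
    simp [key]
  rw [Finset.sum_add_distrib, ← Finset.mul_sum, ← Finset.mul_sum] at hsum
  have h2' : ∑ s : b, ρ₂ s s = 1 := h₂
  have hB' : ∑ s : b, B s s = 0 := hB
  rw [h2', hB', mul_one, mul_zero, add_zero] at hsum
  simpa using hsum

lemma kron_cancel_right {A ρ₁ : Matrix a a ℂ} {B ρ₂ : Matrix b b ℂ}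
    (h : A ⊗ₖ ρ₂ + ρ₁ ⊗ₖ B = 0) (h₁ : ρ₁.trace = 1) (hA : A.trace = 0) : B = 0 := by
  ext s t
  have key : ∀ i : a, A i i * ρ₂ s t + ρ₁ i i * B s t = 0 := by
    intro i
    have := congrFun (congrFun h (i, s)) (i, t)
    simpa using this
  have hsum : ∑ i : a, (A i i * ρ₂ s t + ρ₁ i i * B s t) = 0 := by
    simp [key]
  rw [Finset.sum_add_distrib, ← Finset.sum_mul, ← Finset.sum_mul] at hsum
  have h1' : ∑ i : a, ρ₁ i i = 1 := h₁
  have hA' : ∑ i : a, A i i = 0 := hA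
  rw [h1', hA', one_mul, zero_mul, zero_add] at hsum
  simpa using hsum

end KronSum

section Joint

variable {n₁ n₂ K₁ K₂ : Type} [Fintype n₁] [DecidableEq n₁] [Fintype n₂] [DecidableEq n₂]
    [Fintype K₁] [Fintype K₂]

lemma lindblad_kron (H₁ : Matrix n₁ n₁ ℂ) (J₁ : K₁ → Matrix n₁ n₁ ℂ)
    (H₂ : Matrix n₂ n₂ ℂ) (J₂ : K₂ → Matrix n₂ n₂ ℂ)
    (ρ₁ : Matrix n₁ n₁ ℂ) (ρ₂ : Matrix n₂ n₂ ℂ) :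
    lindblad (H₁ ⊗ₖ (1 : Matrix n₂ n₂ ℂ) + (1 : Matrix n₁ n₁ ℂ) ⊗ₖ H₂)
      (Sum.elim (fun k => J₁ k ⊗ₖ (1 : Matrix n₂ n₂ ℂ))
        (fun k => (1 : Matrix n₁ n₁ ℂ) ⊗ₖ J₂ k)) (ρ₁ ⊗ₖ ρ₂)
      = (lindblad H₁ J₁ ρ₁) ⊗ₖ ρ₂ + ρ₁ ⊗ₖ (lindblad H₂ J₂ ρ₂) := by
  have hK1 : ∀ k : K₁,
      (J₁ k ⊗ₖ (1 : Matrix n₂ n₂ ℂ)) * (ρ₁ ⊗ₖ ρ₂) * (J₁ k ⊗ₖ (1 : Matrix n₂ n₂ ℂ))ᴴ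
        - (1/2 : ℂ) • ((J₁ k ⊗ₖ (1 : Matrix n₂ n₂ ℂ))ᴴ * (J₁ k ⊗ₖ (1 : Matrix n₂ n₂ ℂ)) * (ρ₁ ⊗ₖ ρ₂)
          + (ρ₁ ⊗ₖ ρ₂) * ((J₁ k ⊗ₖ (1 : Matrix n₂ n₂ ℂ))ᴴ * (J₁ k ⊗ₖ (1 : Matrix n₂ n₂ ℂ))))
      = (J₁ k * ρ₁ * (J₁ k)ᴴ
          - (1/2 : ℂ) • ((J₁ k)ᴴ * J₁ k * ρ₁ + ρ₁ * ((J₁ k)ᴴ * J₁ k))) ⊗ₖ ρ₂ := by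
    intro k
    rw [conjT_kron, Matrix.conjTranspose_one]
    simp only [← Matrix.mul_kronecker_mul, one_mul, mul_one]
    rw [← Matrix.add_kronecker, ← Matrix.smul_kronecker, ← sub_kron']
  have hK2 : ∀ k : K₂,
      ((1 : Matrix n₁ n₁ ℂ) ⊗ₖ J₂ k) * (ρ₁ ⊗ₖ ρ₂) * ((1 : Matrix n₁ n₁ ℂ) ⊗ₖ J₂ k)ᴴ
        - (1/2 : ℂ) • (((1 : Matrix n₁ n₁ ℂ) ⊗ₖ J₂ k)ᴴ * ((1 : Matrix n₁ n₁ ℂ) ⊗ₖ J₂ k) * (ρ₁ ⊗ₖ ρ₂)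
          + (ρ₁ ⊗ₖ ρ₂) * (((1 : Matrix n₁ n₁ ℂ) ⊗ₖ J₂ k)ᴴ * ((1 : Matrix n₁ n₁ ℂ) ⊗ₖ J₂ k)))
      = ρ₁ ⊗ₖ (J₂ k * ρ₂ * (J₂ k)ᴴ
          - (1/2 : ℂ) • ((J₂ k)ᴴ * J₂ k * ρ₂ + ρ₂ * ((J₂ k)ᴴ * J₂ k))) := by
    intro k
    rw [conjT_kron, Matrix.conjTranspose_one]
    simp only [← Matrix.mul_kronecker_mul, one_mul, mul_one]
    rw [← Matrix.kronecker_add, ← Matrix.kronecker_smul, ← kron_sub']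
  rw [lindblad, lindblad, lindblad]
  rw [Fintype.sum_sum_type]
  simp only [Sum.elim_inl, Sum.elim_inr]
  simp only [hK1, hK2]
  rw [← sum_kron, ← kron_sum]
  -- now handle the Hamiltonian term
  rw [Matrix.add_mul, Matrix.mul_add, ← Matrix.mul_kronecker_mul, ← Matrix.mul_kronecker_mul,
    ← Matrix.mul_kronecker_mul, ← Matrix.mul_kronecker_mul]
  simp only [one_mul, mul_one]
  have hham : ((H₁ * ρ₁) ⊗ₖ ρ₂ + ρ₁ ⊗ₖ (H₂ * ρ₂)) - ((ρ₁ * H₁) ⊗ₖ ρ₂ + ρ₁ ⊗ₖ (ρ₂ * H₂))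
      = (H₁ * ρ₁ - ρ₁ * H₁) ⊗ₖ ρ₂ + ρ₁ ⊗ₖ (H₂ * ρ₂ - ρ₂ * H₂) := by
    rw [sub_kron', kron_sub']
    abel
  rw [hham, smul_add]
  rw [Matrix.add_kronecker, Matrix.kronecker_add, Matrix.smul_kronecker, Matrix.kronecker_smul]
  abel

end Joint

section ReindexMerge

variable {α β : Type} [Fintype α] [Fintype β] [DecidableEq α] [DecidableEq β]

lemma reindex_add' (e : α ≃ β) (X Y : Matrix β β ℂ) :
    Matrix.reindex e.symm e.symm X + Matrix.reindex e.symm e.symm Y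
      = Matrix.reindex e.symm e.symm (X + Y) := rfl

lemma reindex_sub' (e : α ≃ β) (X Y : Matrix β β ℂ) :
    Matrix.reindex e.symm e.symm X - Matrix.reindex e.symm e.symm Y
      = Matrix.reindex e.symm e.symm (X - Y) := rfl

lemma reindex_smul' (e : α ≃ β) (c : ℂ) (X : Matrix β β ℂ) :
    c • Matrix.reindex e.symm e.symm X = Matrix.reindex e.symm e.symm (c • X) := rfl

lemma reindex_sum' {K : Type} [Fintype K] (e : α ≃ β) (f : K → Matrix β β ℂ) :
    ∑ k, Matrix.reindex e.symm e.symm (f k) = Matrix.reindex e.symm e.symm (∑ k, f k) := by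
  ext i j
  simp [Matrix.sum_apply]

end ReindexMerge

section Joint2

variable {n₁ n₂ K₁ K₂ : Type} [Fintype n₁] [DecidableEq n₁] [Fintype n₂] [DecidableEq n₂]
    [Fintype K₁] [Fintype K₂]

lemma lindbladHat_joint (H₁ : Matrix n₁ n₁ ℂ) (J₁ : K₁ → Matrix n₁ n₁ ℂ)
    (H₂ : Matrix n₂ n₂ ℂ) (J₂ : K₂ → Matrix n₂ n₂ ℂ) :
    lindbladHat (H₁ ⊗ₖ (1 : Matrix n₂ n₂ ℂ) + (1 : Matrix n₁ n₁ ℂ) ⊗ₖ H₂)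
      (Sum.elim (fun k => J₁ k ⊗ₖ (1 : Matrix n₂ n₂ ℂ))
        (fun k => (1 : Matrix n₁ n₁ ℂ) ⊗ₖ J₂ k))
      = Matrix.reindex (σe n₁ n₂).symm (σe n₁ n₂).symm
          ((lindbladHat H₁ J₁) ⊗ₖ (1 : Matrix (n₂ × n₂) (n₂ × n₂) ℂ)
            + (1 : Matrix (n₁ × n₁) (n₁ × n₁) ℂ) ⊗ₖ (lindbladHat H₂ J₂)) := by
  have hone : (1 : Matrix (n₁ × n₂) (n₁ × n₂) ℂ)
      = (1 : Matrix n₁ n₁ ℂ) ⊗ₖ (1 : Matrix n₂ n₂ ℂ) := Matrix.one_kronecker_one.symm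
  rw [lindbladHat]
  rw [Fintype.sum_sum_type]
  simp only [Sum.elim_inl, Sum.elim_inr]
  simp only [hone, Matrix.transpose_add, ← Matrix.kroneckerMap_transpose,
    conjT_kron, map_kron, Matrix.conjTranspose_one, Matrix.transpose_one,
    ← Matrix.mul_kronecker_mul, one_mul, mul_one, Matrix.kronecker_add, Matrix.add_kronecker]
  have hmapone : (1 : Matrix n₂ n₂ ℂ).map (starRingEnd ℂ) = 1 := by
    ext i j; by_cases h : i = j <;> simp [Matrix.one_apply, h]
  have hmapone' : (1 : Matrix n₁ n₁ ℂ).map (starRingEnd ℂ) = 1 := by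
    ext i j; by_cases h : i = j <;> simp [Matrix.one_apply, h]
  simp only [hmapone, hmapone', one_mul, mul_one]
  simp only [kron4]
  simp only [reindex_add', reindex_sub', reindex_smul', reindex_sum', Matrix.one_kronecker_one]
  refine congrArg _ ?_
  rw [lindbladHat, lindbladHat]
  simp only [Matrix.add_kronecker, Matrix.kronecker_add, sub_kron', kron_sub',
    Matrix.smul_kronecker, Matrix.kronecker_smul, sum_kron, kron_sum]
  simp only [smul_add, smul_sub, sub_eq_add_neg, smul_neg, neg_smul, one_smul, neg_neg,
    smul_smul]
  abel

end Joint2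

section MoreHelpers

variable {α β : Type} [Fintype α] [Fintype β] [DecidableEq α] [DecidableEq β]

lemma map_one_star : (1 : Matrix α α ℂ).map (starRingEnd ℂ) = 1 := by
  ext i j; by_cases h : i = j <;> simp [Matrix.one_apply, h]

lemma reindex_mulVec (e : α ≃ β) (M : Matrix β β ℂ) (y : β → ℂ) :
    (Matrix.reindex e.symm e.symm M) *ᵥ (y ∘ ⇑e) = (M *ᵥ y) ∘ ⇑e := by
  funext i
  simp only [Matrix.mulVec, dotProduct, Matrix.reindex_apply, Matrix.submatrix_apply,
    Function.comp_apply, Equiv.symm_symm]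
  rw [← Equiv.sum_comp e (fun j => M (e i) j * y j)]

lemma dot_comp (e : α ≃ β) (u v : β → ℂ) : (u ∘ ⇑e) ⬝ᵥ (v ∘ ⇑e) = u ⬝ᵥ v := by
  simp only [dotProduct, Function.comp_apply]
  rw [← Equiv.sum_comp e (fun j => u j * v j)]

lemma star_comp (e : α ≃ β) (u : β → ℂ) : star (u ∘ ⇑e) = (star u) ∘ ⇑e := rfl

lemma vecMul_smulM (v : α → ℂ) (c : ℂ) (M : Matrix α α ℂ) :
    v ᵥ* (c • M) = c • (v ᵥ* M) := by
  funext j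
  simp [Matrix.vecMul, dotProduct, Finset.mul_sum]
  refine Finset.sum_congr rfl fun i _ => by ring

lemma vecMulVec_mulVec' (x u v : α → ℂ) :
    (Matrix.vecMulVec x u) *ᵥ v = (u ⬝ᵥ v) • x := by
  funext i
  simp [Matrix.mulVec, Matrix.vecMulVec_apply, dotProduct, Finset.mul_sum]
  rw [Finset.sum_mul]
  refine Finset.sum_congr rfl fun j _ => by ring

lemma dotProduct_sum' {K : Type} [Fintype K] (v : α → ℂ) (f : K → α → ℂ) :
    v ⬝ᵥ (∑ k, f k) = ∑ k, v ⬝ᵥ f k := by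
  simp [dotProduct, Finset.sum_apply, Finset.mul_sum]
  rw [Finset.sum_comm]

lemma dotProduct_smul' (c : ℂ) (v w : α → ℂ) : v ⬝ᵥ (c • w) = c * (v ⬝ᵥ w) := by
  simp [dotProduct, Finset.mul_sum]
  refine Finset.sum_congr rfl fun i _ => by ring

end MoreHelpers

section Joint3

variable {n₁ n₂ K₁ K₂ : Type} [Fintype n₁] [DecidableEq n₁] [Fintype n₂] [DecidableEq n₂]
    [Fintype K₁] [Fintype K₂]

lemma currentMat_joint (J₁ : K₁ → Matrix n₁ n₁ ℂ) (J₂ : K₂ → Matrix n₂ n₂ ℂ)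
    (w₁ : K₁ → ℝ) (w₂ : K₂ → ℝ) :
    currentMat (Sum.elim (fun k => J₁ k ⊗ₖ (1 : Matrix n₂ n₂ ℂ))
        (fun k => (1 : Matrix n₁ n₁ ℂ) ⊗ₖ J₂ k)) (Sum.elim w₁ w₂)
      = Matrix.reindex (σe n₁ n₂).symm (σe n₁ n₂).symm
          ((currentMat J₁ w₁) ⊗ₖ (1 : Matrix (n₂ × n₂) (n₂ × n₂) ℂ)
            + (1 : Matrix (n₁ × n₁) (n₁ × n₁) ℂ) ⊗ₖ (currentMat J₂ w₂)) := by
  rw [currentMat]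
  rw [Fintype.sum_sum_type]
  simp only [Sum.elim_inl, Sum.elim_inr, map_kron, map_one_star]
  simp only [kron4]
  simp only [reindex_smul', reindex_sum', reindex_add']
  refine congrArg _ ?_
  rw [currentMat, currentMat]
  simp only [sum_kron, kron_sum, Matrix.smul_kronecker, Matrix.kronecker_smul,
    Matrix.one_kronecker_one]

lemma vecMulVec_joint (x₁ u₁ : n₁ × n₁ → ℂ) (x₂ u₂ : n₂ × n₂ → ℂ) :
    Matrix.vecMulVec (tens x₁ x₂ ∘ ⇑(σe n₁ n₂)) (tens u₁ u₂ ∘ ⇑(σe n₁ n₂))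
      = Matrix.reindex (σe n₁ n₂).symm (σe n₁ n₂).symm
          ((Matrix.vecMulVec x₁ u₁) ⊗ₖ (Matrix.vecMulVec x₂ u₂)) := by
  ext ⟨⟨i₁,i₂⟩,⟨j₁,j₂⟩⟩ ⟨⟨k₁,k₂⟩,⟨l₁,l₂⟩⟩
  simp [Matrix.vecMulVec_apply, tens, σe, Equiv.prodProdProdComm]
  ring

lemma vecM_one_joint : vecM (1 : Matrix (n₁ × n₂) (n₁ × n₂) ℂ)
    = (tens (vecM (1 : Matrix n₁ n₁ ℂ)) (vecM (1 : Matrix n₂ n₂ ℂ))) ∘ ⇑(σe n₁ n₂) := by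
  rw [← Matrix.one_kronecker_one (α := ℂ) (m := n₁) (n := n₂), vecM_kron']

lemma noiseIntegrand_joint (H₁ : Matrix n₁ n₁ ℂ) (J₁ : K₁ → Matrix n₁ n₁ ℂ)
    (H₂ : Matrix n₂ n₂ ℂ) (J₂ : K₂ → Matrix n₂ n₂ ℂ)
    (ρ₁ : Matrix n₁ n₁ ℂ) (ρ₂ : Matrix n₂ n₂ ℂ) (τ : ℝ) :
    noiseIntegrand (H₁ ⊗ₖ (1 : Matrix n₂ n₂ ℂ) + (1 : Matrix n₁ n₁ ℂ) ⊗ₖ H₂)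
      (Sum.elim (fun k => J₁ k ⊗ₖ (1 : Matrix n₂ n₂ ℂ))
        (fun k => (1 : Matrix n₁ n₁ ℂ) ⊗ₖ J₂ k)) (ρ₁ ⊗ₖ ρ₂) τ
      = Matrix.reindex (σe n₁ n₂).symm (σe n₁ n₂).symm
          ((NormedSpace.exp ((τ:ℂ) • lindbladHat H₁ J₁))
              ⊗ₖ (NormedSpace.exp ((τ:ℂ) • lindbladHat H₂ J₂))
            - (Matrix.vecMulVec (vecM ρ₁) (star (vecM (1 : Matrix n₁ n₁ ℂ))))
              ⊗ₖ (Matrix.vecMulVec (vecM ρ₂) (star (vecM (1 : Matrix n₂ n₂ ℂ))))) := by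
  rw [noiseIntegrand, lindbladHat_joint]
  rw [reindex_smul' (σe n₁ n₂)]
  rw [exp_reindex (σe n₁ n₂).symm]
  have hexp : NormedSpace.exp ((τ:ℂ) • ((lindbladHat H₁ J₁) ⊗ₖ (1 : Matrix (n₂ × n₂) (n₂ × n₂) ℂ)
      + (1 : Matrix (n₁ × n₁) (n₁ × n₁) ℂ) ⊗ₖ (lindbladHat H₂ J₂)))
      = (NormedSpace.exp ((τ:ℂ) • lindbladHat H₁ J₁))
          ⊗ₖ (NormedSpace.exp ((τ:ℂ) • lindbladHat H₂ J₂)) := by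
    rw [smul_add, ← Matrix.smul_kronecker, ← Matrix.kronecker_smul]
    exact exp_kron_sum _ _
  rw [hexp]
  have hP : Matrix.vecMulVec (vecM (ρ₁ ⊗ₖ ρ₂))
        (star (vecM (1 : Matrix (n₁ × n₂) (n₁ × n₂) ℂ)))
      = Matrix.reindex (σe n₁ n₂).symm (σe n₁ n₂).symm
          ((Matrix.vecMulVec (vecM ρ₁) (star (vecM (1 : Matrix n₁ n₁ ℂ))))
            ⊗ₖ (Matrix.vecMulVec (vecM ρ₂) (star (vecM (1 : Matrix n₂ n₂ ℂ))))) := by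
    rw [vecM_kron', vecM_one_joint, star_comp, star_tens, vecMulVec_joint]
  rw [hP, reindex_sub']

lemma avgCurrent_trace {n K : Type} [Fintype n] [DecidableEq n] [Fintype K]
    (J : K → Matrix n n ℂ) (w : K → ℝ) (ρ : Matrix n n ℂ) :
    avgCurrent J w ρ = ∑ k, (w k : ℂ) * (J k * ρ * (J k)ᴴ).trace := by
  rw [avgCurrent, currentMat, sum_mulVec']
  rw [dotProduct_sum']
  refine Finset.sum_congr rfl fun k _ => ?_
  rw [Matrix.smul_mulVec, conj_eq_transpose_conjT, kron_mulVec_vecM,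
    dotProduct_smul', dot_vecM_one]

end Joint3

section AbstractScalar

variable {α β : Type} [Fintype α] [Fintype β] [DecidableEq α] [DecidableEq β]

lemma joint_scalar (a₁ x₁ : α → ℂ) (a₂ x₂ : β → ℂ)
    (A₁ E₁ : Matrix α α ℂ) (A₂ E₂ : Matrix β β ℂ)
    (h1 : star a₁ ᵥ* E₁ = star a₁) (h2 : E₁ *ᵥ x₁ = x₁)
    (h3 : star a₂ ᵥ* E₂ = star a₂) (h4 : E₂ *ᵥ x₂ = x₂)
    (t1 : star a₁ ⬝ᵥ x₁ = 1) (t2 : star a₂ ⬝ᵥ x₂ = 1) :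
    star (tens a₁ a₂) ⬝ᵥ ((A₁ ⊗ₖ (1 : Matrix β β ℂ) + (1 : Matrix α α ℂ) ⊗ₖ A₂) *ᵥ
      ((E₁ ⊗ₖ E₂ - (Matrix.vecMulVec x₁ (star a₁)) ⊗ₖ (Matrix.vecMulVec x₂ (star a₂))) *ᵥ
        ((A₁ ⊗ₖ (1 : Matrix β β ℂ) + (1 : Matrix α α ℂ) ⊗ₖ A₂) *ᵥ tens x₁ x₂)))
    = star a₁ ⬝ᵥ (A₁ *ᵥ ((E₁ - Matrix.vecMulVec x₁ (star a₁)) *ᵥ (A₁ *ᵥ x₁)))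
      + star a₂ ⬝ᵥ (A₂ *ᵥ ((E₂ - Matrix.vecMulVec x₂ (star a₂)) *ᵥ (A₂ *ᵥ x₂))) := by
  set P₁ := Matrix.vecMulVec x₁ (star a₁) with hP₁
  set P₂ := Matrix.vecMulVec x₂ (star a₂) with hP₂
  have hP1v : ∀ v, P₁ *ᵥ v = (star a₁ ⬝ᵥ v) • x₁ := fun v => vecMulVec_mulVec' _ _ _
  have hP2v : ∀ v, P₂ *ᵥ v = (star a₂ ⬝ᵥ v) • x₂ := fun v => vecMulVec_mulVec' _ _ _
  have key1 : ∀ z, star a₁ ⬝ᵥ ((E₁ - P₁) *ᵥ z) = 0 := by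
    intro z
    rw [Matrix.sub_mulVec, dotProduct_sub, Matrix.dotProduct_mulVec, h1, hP1v,
      dotProduct_smul', t1, mul_one, sub_self]
  have key2 : ∀ z, star a₂ ⬝ᵥ ((E₂ - P₂) *ᵥ z) = 0 := by
    intro z
    rw [Matrix.sub_mulVec, dotProduct_sub, Matrix.dotProduct_mulVec, h3, hP2v,
      dotProduct_smul', t2, mul_one, sub_self]
  have hP1x : P₁ *ᵥ x₁ = x₁ := by rw [hP1v, t1, one_smul]
  have hP2x : P₂ *ᵥ x₂ = x₂ := by rw [hP2v, t2, one_smul]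
  -- innermost application
  have step1 : (A₁ ⊗ₖ (1 : Matrix β β ℂ) + (1 : Matrix α α ℂ) ⊗ₖ A₂) *ᵥ tens x₁ x₂
      = tens (A₁ *ᵥ x₁) x₂ + tens x₁ (A₂ *ᵥ x₂) := by
    rw [Matrix.add_mulVec, kron_mulVec_tens, kron_mulVec_tens, Matrix.one_mulVec,
      Matrix.one_mulVec]
  -- middle application
  have step2 : (E₁ ⊗ₖ E₂ - P₁ ⊗ₖ P₂) *ᵥ (tens (A₁ *ᵥ x₁) x₂ + tens x₁ (A₂ *ᵥ x₂))
      = tens ((E₁ - P₁) *ᵥ (A₁ *ᵥ x₁)) x₂ + tens x₁ ((E₂ - P₂) *ᵥ (A₂ *ᵥ x₂)) := by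
    rw [Matrix.mulVec_add, Matrix.sub_mulVec, Matrix.sub_mulVec,
      kron_mulVec_tens, kron_mulVec_tens, kron_mulVec_tens, kron_mulVec_tens,
      h2, h4, hP1x, hP2x]
    rw [Matrix.sub_mulVec, Matrix.sub_mulVec, tens_sub_left, tens_sub_right]
  -- outer application
  have step3 : (A₁ ⊗ₖ (1 : Matrix β β ℂ) + (1 : Matrix α α ℂ) ⊗ₖ A₂) *ᵥ
      (tens ((E₁ - P₁) *ᵥ (A₁ *ᵥ x₁)) x₂ + tens x₁ ((E₂ - P₂) *ᵥ (A₂ *ᵥ x₂)))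
      = tens (A₁ *ᵥ ((E₁ - P₁) *ᵥ (A₁ *ᵥ x₁))) x₂
        + tens ((E₁ - P₁) *ᵥ (A₁ *ᵥ x₁)) (A₂ *ᵥ x₂)
        + (tens (A₁ *ᵥ x₁) ((E₂ - P₂) *ᵥ (A₂ *ᵥ x₂))
        + tens x₁ (A₂ *ᵥ ((E₂ - P₂) *ᵥ (A₂ *ᵥ x₂)))) := by
    rw [Matrix.add_mulVec, Matrix.mulVec_add, Matrix.mulVec_add,
      kron_mulVec_tens, kron_mulVec_tens, kron_mulVec_tens, kron_mulVec_tens]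
    simp only [Matrix.one_mulVec]
    abel
  rw [step1, step2, step3]
  rw [star_tens]
  rw [dotProduct_add, dotProduct_add, dotProduct_add]
  rw [tens_dot, tens_dot, tens_dot, tens_dot]
  rw [key1, key2, t1, t2]
  ring_nf

end AbstractScalar

section IntegralHelpers

variable {n K : Type} [Fintype n] [DecidableEq n] [Fintype K]

lemma dot_shape (M : Matrix (n × n) (n × n) ℂ) (u c : n × n → ℂ) :
    u ⬝ᵥ (M *ᵥ c) = ∑ p, ∑ q, u p * M p q * c q := by
  simp only [dotProduct, Matrix.mulVec, Finset.mul_sum]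
  exact Finset.sum_congr rfl fun p _ => Finset.sum_congr rfl fun q _ => by ring

lemma integrable_dot (H : Matrix n n ℂ) (J : K → Matrix n n ℂ) (ρ : Matrix n n ℂ)
    (hconv : noiseConv H J ρ) (u c : n × n → ℂ) :
    IntegrableOn (fun τ : ℝ => u ⬝ᵥ (noiseIntegrand H J ρ τ *ᵥ c)) (Set.Ioi 0) := by
  have hshape : (fun τ : ℝ => u ⬝ᵥ (noiseIntegrand H J ρ τ *ᵥ c))
      = fun τ : ℝ => ∑ p, ∑ q, u p * noiseIntegrand H J ρ τ p q * c q := by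
    funext τ; exact dot_shape _ _ _
  rw [hshape]
  apply MeasureTheory.integrable_finset_sum
  intro p _
  apply MeasureTheory.integrable_finset_sum
  intro q _
  exact ((hconv p q).const_mul (u p)).mul_const (c q)

lemma dot_noiseQ (H : Matrix n n ℂ) (J : K → Matrix n n ℂ) (ρ : Matrix n n ℂ)
    (hconv : noiseConv H J ρ) (u c : n × n → ℂ) :
    u ⬝ᵥ (noiseQ H J ρ *ᵥ c)
      = ∫ τ in Set.Ioi (0:ℝ), u ⬝ᵥ (noiseIntegrand H J ρ τ *ᵥ c) := by
  have hshape : (fun τ : ℝ => u ⬝ᵥ (noiseIntegrand H J ρ τ *ᵥ c))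
      = fun τ : ℝ => ∑ p, ∑ q, u p * noiseIntegrand H J ρ τ p q * c q := by
    funext τ; exact dot_shape _ _ _
  rw [hshape]
  rw [MeasureTheory.integral_finset_sum _ (fun p _ =>
    MeasureTheory.integrable_finset_sum _ (fun q _ =>
      ((hconv p q).const_mul (u p)).mul_const (c q)))]
  rw [dot_shape]
  refine Finset.sum_congr rfl fun p _ => ?_
  rw [MeasureTheory.integral_finset_sum _ (fun q _ =>
      ((hconv p q).const_mul (u p)).mul_const (c q))]
  refine Finset.sum_congr rfl fun q _ => ?_
  rw [MeasureTheory.integral_mul_const, MeasureTheory.integral_const_mul]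
  rfl

end IntegralHelpers

/-- **Additivity of current and noise for independent subsystems (Proposition 3).**
For Lindblad generators `(H_a, {J_{a,k}})` on the two factors (`a = 1, 2`) with weights
`{w⁽ᵃ⁾_k}`, consider the joint generator with Hamiltonian `H₁⊗1 + 1⊗H₂` and jump operators
`J_{1,k}⊗1` (weight `w⁽¹⁾_k`) and `1⊗J_{2,k}` (weight `w⁽²⁾_k`). If the joint system has a
product steady state `ρˢˢ = ρ₁ ⊗ ρ₂` of density matrices, and all three noise integrals
converge entrywise, then each `ρ_a` is a steady state of its own generator, and the joint
average current and noise satisfy `F = F⁽¹⁾ + F⁽²⁾` and `D = D⁽¹⁾ + D⁽²⁾`. -/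
theorem lindblad_joint_additivity
    {n₁ n₂ K₁ K₂ : Type} [Fintype n₁] [DecidableEq n₁] [Fintype n₂] [DecidableEq n₂]
    [Fintype K₁] [Fintype K₂]
    (H₁ : Matrix n₁ n₁ ℂ) (hH₁ : H₁.IsHermitian) (J₁ : K₁ → Matrix n₁ n₁ ℂ) (w₁ : K₁ → ℝ)
    (H₂ : Matrix n₂ n₂ ℂ) (hH₂ : H₂.IsHermitian) (J₂ : K₂ → Matrix n₂ n₂ ℂ) (w₂ : K₂ → ℝ)
    (ρ₁ : Matrix n₁ n₁ ℂ) (hρ₁ : IsDensityMatrix ρ₁)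
    (ρ₂ : Matrix n₂ n₂ ℂ) (hρ₂ : IsDensityMatrix ρ₂)
    -- the joint generator: Hamiltonian `H₁⊗1 + 1⊗H₂`, jump operators `J_{1,k}⊗1`, `1⊗J_{2,k}`
    (Hjoint : Matrix (n₁ × n₂) (n₁ × n₂) ℂ)
    (hHjoint : Hjoint = H₁ ⊗ₖ (1 : Matrix n₂ n₂ ℂ) + (1 : Matrix n₁ n₁ ℂ) ⊗ₖ H₂)
    (Jjoint : K₁ ⊕ K₂ → Matrix (n₁ × n₂) (n₁ × n₂) ℂ)
    (hJjoint : Jjoint = Sum.elim (fun k => J₁ k ⊗ₖ (1 : Matrix n₂ n₂ ℂ))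
        (fun k => (1 : Matrix n₁ n₁ ℂ) ⊗ₖ J₂ k))
    (wjoint : K₁ ⊕ K₂ → ℝ) (hwjoint : wjoint = Sum.elim w₁ w₂)
    -- `ρ₁ ⊗ ρ₂` is a steady state of the joint generator
    (hsteady : lindblad Hjoint Jjoint (ρ₁ ⊗ₖ ρ₂) = 0)
    -- convergence of all the improper noise integrals
    (hconv : noiseConv Hjoint Jjoint (ρ₁ ⊗ₖ ρ₂))
    (hconv₁ : noiseConv H₁ J₁ ρ₁) (hconv₂ : noiseConv H₂ J₂ ρ₂) :
    lindblad H₁ J₁ ρ₁ = 0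
    ∧ lindblad H₂ J₂ ρ₂ = 0
    ∧ avgCurrent Jjoint wjoint (ρ₁ ⊗ₖ ρ₂) = avgCurrent J₁ w₁ ρ₁ + avgCurrent J₂ w₂ ρ₂
    ∧ noise Hjoint Jjoint wjoint (ρ₁ ⊗ₖ ρ₂) = noise H₁ J₁ w₁ ρ₁ + noise H₂ J₂ w₂ ρ₂ := by
  subst hHjoint; subst hJjoint; subst hwjoint
  have hzero : (lindblad H₁ J₁ ρ₁) ⊗ₖ ρ₂ + ρ₁ ⊗ₖ (lindblad H₂ J₂ ρ₂) = 0 := by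
    rw [← lindblad_kron H₁ J₁ H₂ J₂ ρ₁ ρ₂]; exact hsteady
  have s1 : lindblad H₁ J₁ ρ₁ = 0 := kron_cancel_left hzero hρ₂.2 (trace_lindblad H₂ J₂ ρ₂)
  have s2 : lindblad H₂ J₂ ρ₂ = 0 := kron_cancel_right hzero hρ₁.2 (trace_lindblad H₁ J₁ ρ₁)
  have hFgen : ∀ (v₁ : K₁ → ℝ) (v₂ : K₂ → ℝ),
      avgCurrent (Sum.elim (fun k => J₁ k ⊗ₖ (1 : Matrix n₂ n₂ ℂ))
          (fun k => (1 : Matrix n₁ n₁ ℂ) ⊗ₖ J₂ k)) (Sum.elim v₁ v₂) (ρ₁ ⊗ₖ ρ₂)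
        = avgCurrent J₁ v₁ ρ₁ + avgCurrent J₂ v₂ ρ₂ := by
    intro v₁ v₂
    rw [avgCurrent_trace, avgCurrent_trace, avgCurrent_trace, Fintype.sum_sum_type]
    simp only [Sum.elim_inl, Sum.elim_inr]
    congr 1
    · refine Finset.sum_congr rfl fun k _ => ?_
      rw [conjT_kron, Matrix.conjTranspose_one]
      simp only [← Matrix.mul_kronecker_mul, one_mul, mul_one]
      rw [Matrix.trace_kronecker, hρ₂.2, mul_one]
    · refine Finset.sum_congr rfl fun k _ => ?_
      rw [conjT_kron, Matrix.conjTranspose_one]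
      simp only [← Matrix.mul_kronecker_mul, one_mul, mul_one]
      rw [Matrix.trace_kronecker, hρ₁.2, one_mul]
  refine ⟨s1, s2, hFgen w₁ w₂, ?_⟩
  -- now the noise additivity
  have t1 : star (vecM (1 : Matrix n₁ n₁ ℂ)) ⬝ᵥ vecM ρ₁ = 1 := by
    rw [dot_vecM_one]; exact hρ₁.2
  have t2 : star (vecM (1 : Matrix n₂ n₂ ℂ)) ⬝ᵥ vecM ρ₂ = 1 := by
    rw [dot_vecM_one]; exact hρ₂.2
  have hE1L : ∀ τ : ℝ, star (vecM (1 : Matrix n₁ n₁ ℂ))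
      ᵥ* NormedSpace.exp ((τ:ℂ) • lindbladHat H₁ J₁) = star (vecM (1 : Matrix n₁ n₁ ℂ)) := by
    intro τ
    apply vecMul_exp
    rw [vecMul_smulM, vecMul_lindbladHat, smul_zero]
  have hE2L : ∀ τ : ℝ, star (vecM (1 : Matrix n₂ n₂ ℂ))
      ᵥ* NormedSpace.exp ((τ:ℂ) • lindbladHat H₂ J₂) = star (vecM (1 : Matrix n₂ n₂ ℂ)) := by
    intro τ
    apply vecMul_exp
    rw [vecMul_smulM, vecMul_lindbladHat, smul_zero]
  have hE1R : ∀ τ : ℝ, NormedSpace.exp ((τ:ℂ) • lindbladHat H₁ J₁) *ᵥ vecM ρ₁ = vecM ρ₁ := by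
    intro τ
    apply exp_mulVec
    rw [Matrix.smul_mulVec, lindbladHat_mulVec, s1, vecM_zero, smul_zero]
  have hE2R : ∀ τ : ℝ, NormedSpace.exp ((τ:ℂ) • lindbladHat H₂ J₂) *ᵥ vecM ρ₂ = vecM ρ₂ := by
    intro τ
    apply exp_mulVec
    rw [Matrix.smul_mulVec, lindbladHat_mulVec, s2, vecM_zero, smul_zero]
  have hpoint : ∀ τ : ℝ,
      star (vecM (1 : Matrix (n₁ × n₂) (n₁ × n₂) ℂ)) ⬝ᵥ
        (currentMat (Sum.elim (fun k => J₁ k ⊗ₖ (1 : Matrix n₂ n₂ ℂ))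
            (fun k => (1 : Matrix n₁ n₁ ℂ) ⊗ₖ J₂ k)) (Sum.elim w₁ w₂) *ᵥ
          (noiseIntegrand (H₁ ⊗ₖ (1 : Matrix n₂ n₂ ℂ) + (1 : Matrix n₁ n₁ ℂ) ⊗ₖ H₂)
              (Sum.elim (fun k => J₁ k ⊗ₖ (1 : Matrix n₂ n₂ ℂ))
                (fun k => (1 : Matrix n₁ n₁ ℂ) ⊗ₖ J₂ k)) (ρ₁ ⊗ₖ ρ₂) τ *ᵥ
            (currentMat (Sum.elim (fun k => J₁ k ⊗ₖ (1 : Matrix n₂ n₂ ℂ))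
                (fun k => (1 : Matrix n₁ n₁ ℂ) ⊗ₖ J₂ k)) (Sum.elim w₁ w₂) *ᵥ
              vecM (ρ₁ ⊗ₖ ρ₂))))
      = star (vecM (1 : Matrix n₁ n₁ ℂ)) ⬝ᵥ (currentMat J₁ w₁ *ᵥ
          (noiseIntegrand H₁ J₁ ρ₁ τ *ᵥ (currentMat J₁ w₁ *ᵥ vecM ρ₁)))
        + star (vecM (1 : Matrix n₂ n₂ ℂ)) ⬝ᵥ (currentMat J₂ w₂ *ᵥ
          (noiseIntegrand H₂ J₂ ρ₂ τ *ᵥ (currentMat J₂ w₂ *ᵥ vecM ρ₂))) := by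
    intro τ
    rw [currentMat_joint, noiseIntegrand_joint, vecM_kron', vecM_one_joint, star_comp]
    rw [reindex_mulVec, reindex_mulVec, reindex_mulVec, dot_comp]
    simp only [noiseIntegrand]
    exact joint_scalar (vecM (1 : Matrix n₁ n₁ ℂ)) (vecM ρ₁) (vecM (1 : Matrix n₂ n₂ ℂ))
      (vecM ρ₂) (currentMat J₁ w₁) (NormedSpace.exp ((τ:ℂ) • lindbladHat H₁ J₁))
      (currentMat J₂ w₂) (NormedSpace.exp ((τ:ℂ) • lindbladHat H₂ J₂))
      (hE1L τ) (hE1R τ) (hE2L τ) (hE2R τ) t1 t2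
  have hw2 : (fun k => ((Sum.elim w₁ w₂ k : ℝ) ^ 2))
      = Sum.elim (fun k => w₁ k ^ 2) (fun k => w₂ k ^ 2) := by
    funext k; cases k <;> rfl
  rw [noise, noise, noise, hw2]
  have hfirst := hFgen (fun k => w₁ k ^ 2) (fun k => w₂ k ^ 2)
  simp only [avgCurrent] at hfirst
  rw [hfirst]
  have hfun : (fun τ : ℝ => (star (vecM (1 : Matrix (n₁ × n₂) (n₁ × n₂) ℂ))
        ᵥ* currentMat (Sum.elim (fun k => J₁ k ⊗ₖ (1 : Matrix n₂ n₂ ℂ))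
            (fun k => (1 : Matrix n₁ n₁ ℂ) ⊗ₖ J₂ k)) (Sum.elim w₁ w₂)) ⬝ᵥ
        (noiseIntegrand (H₁ ⊗ₖ (1 : Matrix n₂ n₂ ℂ) + (1 : Matrix n₁ n₁ ℂ) ⊗ₖ H₂)
            (Sum.elim (fun k => J₁ k ⊗ₖ (1 : Matrix n₂ n₂ ℂ))
              (fun k => (1 : Matrix n₁ n₁ ℂ) ⊗ₖ J₂ k)) (ρ₁ ⊗ₖ ρ₂) τ *ᵥ
          (currentMat (Sum.elim (fun k => J₁ k ⊗ₖ (1 : Matrix n₂ n₂ ℂ))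
              (fun k => (1 : Matrix n₁ n₁ ℂ) ⊗ₖ J₂ k)) (Sum.elim w₁ w₂) *ᵥ
            vecM (ρ₁ ⊗ₖ ρ₂))))
      = fun τ : ℝ =>
        ((star (vecM (1 : Matrix n₁ n₁ ℂ)) ᵥ* currentMat J₁ w₁) ⬝ᵥ
          (noiseIntegrand H₁ J₁ ρ₁ τ *ᵥ (currentMat J₁ w₁ *ᵥ vecM ρ₁)))
        + ((star (vecM (1 : Matrix n₂ n₂ ℂ)) ᵥ* currentMat J₂ w₂) ⬝ᵥ
          (noiseIntegrand H₂ J₂ ρ₂ τ *ᵥ (currentMat J₂ w₂ *ᵥ vecM ρ₂))) := by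
    funext τ
    rw [← Matrix.dotProduct_mulVec, hpoint τ,
      Matrix.dotProduct_mulVec (star (vecM (1 : Matrix n₁ n₁ ℂ))) (currentMat J₁ w₁),
      Matrix.dotProduct_mulVec (star (vecM (1 : Matrix n₂ n₂ ℂ))) (currentMat J₂ w₂)]
  have hsecond : star (vecM (1 : Matrix (n₁ × n₂) (n₁ × n₂) ℂ)) ⬝ᵥ
      (currentMat (Sum.elim (fun k => J₁ k ⊗ₖ (1 : Matrix n₂ n₂ ℂ))
          (fun k => (1 : Matrix n₁ n₁ ℂ) ⊗ₖ J₂ k)) (Sum.elim w₁ w₂) *ᵥ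
        (noiseQ (H₁ ⊗ₖ (1 : Matrix n₂ n₂ ℂ) + (1 : Matrix n₁ n₁ ℂ) ⊗ₖ H₂)
            (Sum.elim (fun k => J₁ k ⊗ₖ (1 : Matrix n₂ n₂ ℂ))
              (fun k => (1 : Matrix n₁ n₁ ℂ) ⊗ₖ J₂ k)) (ρ₁ ⊗ₖ ρ₂) *ᵥ
          (currentMat (Sum.elim (fun k => J₁ k ⊗ₖ (1 : Matrix n₂ n₂ ℂ))
              (fun k => (1 : Matrix n₁ n₁ ℂ) ⊗ₖ J₂ k)) (Sum.elim w₁ w₂) *ᵥ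
            vecM (ρ₁ ⊗ₖ ρ₂))))
      = star (vecM (1 : Matrix n₁ n₁ ℂ)) ⬝ᵥ (currentMat J₁ w₁ *ᵥ
          (noiseQ H₁ J₁ ρ₁ *ᵥ (currentMat J₁ w₁ *ᵥ vecM ρ₁)))
        + star (vecM (1 : Matrix n₂ n₂ ℂ)) ⬝ᵥ (currentMat J₂ w₂ *ᵥ
          (noiseQ H₂ J₂ ρ₂ *ᵥ (currentMat J₂ w₂ *ᵥ vecM ρ₂))) := by
    rw [Matrix.dotProduct_mulVec, dot_noiseQ _ _ _ hconv, hfun,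
      MeasureTheory.integral_add (integrable_dot _ _ _ hconv₁ _ _)
        (integrable_dot _ _ _ hconv₂ _ _),
      ← dot_noiseQ _ _ _ hconv₁, ← dot_noiseQ _ _ _ hconv₂,
      ← Matrix.dotProduct_mulVec, ← Matrix.dotProduct_mulVec]
  rw [hsecond]
  ring
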